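/- arXiv:nlin/0003020 — 11 statements merged into one kernel-verified Lean document; each statement's English description precedes it below -/
import Mathlib

section
/- The functions H_0 = (1/16)(-2u_2u_4 + 6u_0^2u_4 + u_3^2 - 12u_0u_1u_3 + 16u_0u_2^2 + 12u_1^2u_2 - 60u_0^3u_2 + 36u_0^5), H_1 = -(1/4)(2u_0u_4 - 2u_1u_3 + u_2^2 - 20u_0^2u_2 + 15u_0^4), and H_2 = u_4 - 10u_0u_2 - 5u_1^2 + 10u_0^3 are integrals of motion for the vector field X_1 on R^5 given by (du_0/dt, du_1/dt, du_2/dt, du_3/dt, du_4/dt) = (u_1, u_2, u_3, u_4, 10u_0u_3 + 20u_1u_2 - 30u_0^2u_1), i.e., the Lie derivative of each H_i along X_1 vanishes identically. -/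
noncomputable section

/-- Partial derivative of `H : ℝ⁵ → ℝ` at `u` in the `i`-th coordinate direction. -/
noncomputable def pd (H : (Fin 5 → ℝ) → ℝ) (u : Fin 5 → ℝ) (i : Fin 5) : ℝ :=
  fderiv ℝ H u (Pi.single i 1)

/-- The Hamiltonian `H₀` of the stationary KdV₅ system. -/
def H0 (u : Fin 5 → ℝ) : ℝ :=
  (1/16) * (-2*u 2*u 4 + 6*(u 0)^2*u 4 + (u 3)^2 - 12*u 0*u 1*u 3
    + 16*u 0*(u 2)^2 + 12*(u 1)^2*u 2 - 60*(u 0)^3*u 2 + 36*(u 0)^5)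

/-- The Hamiltonian `H₁` of the stationary KdV₅ system. -/
def H1 (u : Fin 5 → ℝ) : ℝ :=
  -(1/4) * (2*u 0*u 4 - 2*u 1*u 3 + (u 2)^2 - 20*(u 0)^2*u 2 + 15*(u 0)^4)

/-- The Hamiltonian `H₂` of the stationary KdV₅ system. -/
def H2 (u : Fin 5 → ℝ) : ℝ :=
  u 4 - 10*u 0*u 2 - 5*(u 1)^2 + 10*(u 0)^3

/-- The first vector field `X₁` of the stationary KdV₅ system. -/
def X1 (u : Fin 5 → ℝ) : Fin 5 → ℝ :=
  ![u 1, u 2, u 3, u 4, 10*u 0*u 3 + 20*u 1*u 2 - 30*(u 0)^2*u 1]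

/-- The third vector field `X₃` of the stationary KdV₅ system. -/
def X3 (u : Fin 5 → ℝ) : Fin 5 → ℝ :=
  ![(1/4)*(u 3 - 6*u 0*u 1),
    (1/4)*(u 4 - 6*u 0*u 2 - 6*(u 1)^2),
    (1/4)*(4*u 0*u 3 + 2*u 1*u 2 - 30*(u 0)^2*u 1),
    (1/4)*(4*u 0*u 4 + 6*u 1*u 3 + 2*(u 2)^2 - 30*(u 0)^2*u 2 - 60*u 0*(u 1)^2),
    (1/4)*(10*u 1*u 4 + 10*(u 0)^2*u 3 + 10*u 2*u 3 - 100*u 0*u 1*u 2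
      - 60*(u 1)^3 - 120*(u 0)^3*u 1)]

/-- The first Poisson tensor `P₀` of the stationary KdV₅ system. -/
def P0 (u : Fin 5 → ℝ) : Matrix (Fin 5) (Fin 5) ℝ :=
  !![0, 0, 0, 2, 0;
     0, 0, -2, 0, -20*u 0;
     0, 2, 0, 20*u 0, 20*u 1;
     -2, 0, -20*u 0, 0, -140*(u 0)^2 - 20*u 2;
     0, 20*u 0, -20*u 1, 140*(u 0)^2 + 20*u 2, 0]

/-- The second Poisson tensor `P₁` of the stationary KdV₅ system. -/
def P1 (u : Fin 5 → ℝ) : Matrix (Fin 5) (Fin 5) ℝ :=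
  !![0, 1/2, 0, 3*u 0, 6*u 1;
     -(1/2), 0, -3*u 0, -3*u 1, -4*u 2 - 15*(u 0)^2;
     0, 3*u 0, 0, u 2 + 15*(u 0)^2, u 3 + 30*u 0*u 1;
     -3*u 0, 3*u 1, -(u 2 + 15*(u 0)^2), 0, u 4 - 40*u 0*u 2 + 30*(u 1)^2 - 60*(u 0)^3;
     -6*u 1, 4*u 2 + 15*(u 0)^2, -(u 3 + 30*u 0*u 1),
       -(u 4 - 40*u 0*u 2 + 30*(u 1)^2 - 60*(u 0)^3), 0]

/-- One term of the cyclic Jacobi expression: `∑ₗ P_{il} ∂Q_{jk}/∂u_l`. -/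
noncomputable def jacTerm (P Q : (Fin 5 → ℝ) → Matrix (Fin 5) (Fin 5) ℝ)
    (u : Fin 5 → ℝ) (i j k : Fin 5) : ℝ :=
  ∑ l, P u i l * pd (fun v => Q v j k) u l


open ContinuousLinearMap in
private lemma hp (i : Fin 5) (u : Fin 5 → ℝ) :
    HasFDerivAt (fun v : Fin 5 → ℝ => v i)
      (ContinuousLinearMap.proj i : (Fin 5 → ℝ) →L[ℝ] ℝ) u :=
  (ContinuousLinearMap.proj i : (Fin 5 → ℝ) →L[ℝ] ℝ).hasFDerivAt

private lemma hasFDerivAt_npow {f : (Fin 5 → ℝ) → ℝ} {f' : (Fin 5 → ℝ) →L[ℝ] ℝ}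
    {x : Fin 5 → ℝ} (h : HasFDerivAt f f' x) (n : ℕ) :
    HasFDerivAt (fun y => f y ^ n) (((n : ℝ) * f x ^ (n - 1)) • f') x := by
  induction n with
  | zero => simpa using hasFDerivAt_const (1 : ℝ) x
  | succ n ih =>
    have := ih.mul h
    rw [show ((fun y => f y ^ n) * f) = fun y => f y ^ (n + 1) from
      funext fun y => (pow_succ _ _).symm] at this
    refine this.congr_fderiv ?_
    ext v
    simp only [ContinuousLinearMap.smul_apply, ContinuousLinearMap.add_apply, smul_eq_mul]
    cases n with
    | zero => simp
    | succ m =>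
      rw [Nat.add_sub_cancel, Nat.add_sub_cancel, pow_succ]
      push_cast
      ring

/-- `H₀, H₁, H₂` are integrals of motion of the vector field `X₁` of KdV₅. -/
theorem stmt0 :
    (∀ u : Fin 5 → ℝ, ∑ i, X1 u i * pd H0 u i = 0) ∧
    (∀ u : Fin 5 → ℝ, ∑ i, X1 u i * pd H1 u i = 0) ∧
    (∀ u : Fin 5 → ℝ, ∑ i, X1 u i * pd H2 u i = 0) := by
  refine ⟨fun u => ?_, fun u => ?_, fun u => ?_⟩
  · have h : HasFDerivAt H0 _ u :=
      ((((((((((hp 2 u).const_mul (-2)).mul (hp 4 u)).add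
        (((hasFDerivAt_npow (hp 0 u) 2).const_mul 6).mul (hp 4 u))).add
        (hasFDerivAt_npow (hp 3 u) 2)).sub
        ((((hp 0 u).const_mul 12).mul (hp 1 u)).mul (hp 3 u))).add
        (((hp 0 u).const_mul 16).mul (hasFDerivAt_npow (hp 2 u) 2))).add
        (((hasFDerivAt_npow (hp 1 u) 2).const_mul 12).mul (hp 2 u))).sub
        (((hasFDerivAt_npow (hp 0 u) 3).const_mul 60).mul (hp 2 u))).add
        ((hasFDerivAt_npow (hp 0 u) 5).const_mul 36)).const_mul (1/16)
    simp only [pd, h.fderiv, X1, Fin.sum_univ_five]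
    simp [ContinuousLinearMap.proj_apply, Pi.single_apply, Fin.isValue,
      Matrix.cons_val_zero, Matrix.cons_val_one, Matrix.head_cons, smul_eq_mul]
    ring
  · have t1 := ((hp 0 u).const_mul 2).mul (hp 4 u)
    have t2 := ((hp 1 u).const_mul 2).mul (hp 3 u)
    have t3 := hasFDerivAt_npow (hp 2 u) 2
    have t4 := ((hasFDerivAt_npow (hp 0 u) 2).const_mul 20).mul (hp 2 u)
    have t5 := (hasFDerivAt_npow (hp 0 u) 4).const_mul 15
    have h : HasFDerivAt H1 _ u :=
      (((((t1.sub t2).add t3).sub t4).add t5)).const_mul (-(1/4))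
    simp only [pd, h.fderiv, X1, Fin.sum_univ_five]
    simp [ContinuousLinearMap.proj_apply, Pi.single_apply, Fin.isValue,
      Matrix.cons_val_zero, Matrix.cons_val_one, Matrix.head_cons, smul_eq_mul]
    ring
  · have h : HasFDerivAt H2 _ u :=
      (((hp 4 u).sub (((hp 0 u).const_mul 10).mul (hp 2 u))).sub
        ((hasFDerivAt_npow (hp 1 u) 2).const_mul 5)).add
        ((hasFDerivAt_npow (hp 0 u) 3).const_mul 10)
    simp only [pd, h.fderiv, X1, Fin.sum_univ_five]
    simp [ContinuousLinearMap.proj_apply, Pi.single_apply, Fin.isValue,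
      Matrix.cons_val_zero, Matrix.cons_val_one, Matrix.head_cons, smul_eq_mul]
    ring

end
end

section
/- The functions H_0, H_1, H_2 (as above) are integrals of motion for the vector field X_3 on R^5 given by du_0/dt = (1/4)(u_3 - 6u_0u_1), du_1/dt = (1/4)(u_4 - 6u_0u_2 - 6u_1^2), du_2/dt = (1/4)(4u_0u_3 + 2u_1u_2 - 30u_0^2u_1), du_3/dt = (1/4)(4u_0u_4 + 6u_1u_3 + 2u_2^2 - 30u_0^2u_2 - 60u_0u_1^2), du_4/dt = (1/4)(10u_1u_4 + 10u_0^2u_3 + 10u_2u_3 - 100u_0u_1u_2 - 60u_1^3 - 120u_0^3u_1). -/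
noncomputable section

abbrev prj (i : Fin 5) : (Fin 5 → ℝ) →L[ℝ] ℝ :=
  ContinuousLinearMap.proj (R := ℝ) (φ := fun _ : Fin 5 => ℝ) i

lemma hproj (u : Fin 5 → ℝ) (i : Fin 5) :
    HasFDerivAt (fun w : Fin 5 → ℝ => w i) (prj i) u := (prj i).hasFDerivAt

set_option maxHeartbeats 2000000 in
/-- `H₀, H₁, H₂` are integrals of motion of the vector field `X₃` of KdV₅. -/
theorem stmt1 :
    (∀ u : Fin 5 → ℝ, ∑ i, X3 u i * pd H0 u i = 0) ∧
    (∀ u : Fin 5 → ℝ, ∑ i, X3 u i * pd H1 u i = 0) ∧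
    (∀ u : Fin 5 → ℝ, ∑ i, X3 u i * pd H2 u i = 0) := by
  refine ⟨fun u => ?_, fun u => ?_, fun u => ?_⟩
  · have hp := hproj u
    have hH : H0 = fun w : Fin 5 → ℝ => (1/16) *
        ((-2)*w 2*w 4 + 6*(w 0*w 0)*w 4 + w 3*w 3 - 12*w 0*w 1*w 3
          + 16*w 0*(w 2*w 2) + 12*(w 1*w 1)*w 2 - 60*(w 0*(w 0*w 0))*w 2
          + 36*(w 0*(w 0*(w 0*(w 0*w 0))))) := by
      funext w; unfold H0; ring
    have t1 := ((hp 2).const_mul (-2)).mul (hp 4)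
    have t2 := (((hp 0).mul (hp 0)).const_mul 6).mul (hp 4)
    have t3 := (hp 3).mul (hp 3)
    have t4 := (((hp 0).const_mul 12).mul (hp 1)).mul (hp 3)
    have t5 := ((hp 0).const_mul 16).mul ((hp 2).mul (hp 2))
    have t6 := (((hp 1).mul (hp 1)).const_mul 12).mul (hp 2)
    have t7 := (((hp 0).mul ((hp 0).mul (hp 0))).const_mul 60).mul (hp 2)
    have t8 := ((hp 0).mul ((hp 0).mul ((hp 0).mul ((hp 0).mul (hp 0))))).const_mul 36
    have h := ((((((t1.add t2).add t3).sub t4).add t5).add t6).sub t7).add t8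
    have h2 := h.const_mul ((1:ℝ)/16)
    simp only [pd, hH, Fin.sum_univ_five]
    erw [h2.fderiv]
    simp [X3, Pi.single_apply]
    ring
  · have hp := hproj u
    have hH : H1 = fun w : Fin 5 → ℝ => -(1/4) *
        (2*w 0*w 4 - 2*w 1*w 3 + w 2*w 2 - 20*(w 0*w 0)*w 2
          + 15*(w 0*(w 0*(w 0*w 0)))) := by
      funext w; unfold H1; ring
    have t1 := ((hp 0).const_mul 2).mul (hp 4)
    have t2 := ((hp 1).const_mul 2).mul (hp 3)
    have t3 := (hp 2).mul (hp 2)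
    have t4 := (((hp 0).mul (hp 0)).const_mul 20).mul (hp 2)
    have t5 := ((hp 0).mul ((hp 0).mul ((hp 0).mul (hp 0)))).const_mul 15
    have h := (((t1.sub t2).add t3).sub t4).add t5
    have h2 := h.const_mul (-((1:ℝ)/4))
    simp only [pd, hH, Fin.sum_univ_five]
    erw [h2.fderiv]
    simp [X3, Pi.single_apply]
    ring
  · have hp := hproj u
    have hH : H2 = fun w : Fin 5 → ℝ =>
        w 4 - 10*w 0*w 2 - 5*(w 1*w 1) + 10*(w 0*(w 0*w 0)) := by
      funext w; unfold H2; ring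
    have h := (((hp 4).sub (((hp 0).const_mul 10).mul (hp 2))).sub
        (((hp 1).mul (hp 1)).const_mul 5)).add
        (((hp 0).mul ((hp 0).mul (hp 0))).const_mul 10)
    simp only [pd, hH, Fin.sum_univ_five]
    erw [h.fderiv]
    simp [X3, Pi.single_apply]
    ring

end
end

section
/- The vector fields X_1 and X_3 of the stationary KdV_5 system commute: their Lie bracket [X_1, X_3] vanishes identically on R^5. -/
noncomputable section

section pdLemmas
variable {f g : (Fin 5 → ℝ) → ℝ} {u : Fin 5 → ℝ} {i j : Fin 5} {c : ℝ}

lemma pd_apply : pd (fun v => v j) u i = if j = i then 1 else 0 := by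
  rw [pd, (hasFDerivAt_apply j u).fderiv]
  simp [ContinuousLinearMap.proj_apply, Pi.single_apply]

lemma pd_const : pd (fun _ => c) u i = 0 := by simp [pd]

lemma pd_add (hf : DifferentiableAt ℝ f u) (hg : DifferentiableAt ℝ g u) :
    pd (fun v => f v + g v) u i = pd f u i + pd g u i := by
  simp [pd, fderiv_fun_add hf hg]

lemma pd_sub (hf : DifferentiableAt ℝ f u) (hg : DifferentiableAt ℝ g u) :
    pd (fun v => f v - g v) u i = pd f u i - pd g u i := by
  simp [pd, fderiv_fun_sub hf hg]

lemma pd_mul (hf : DifferentiableAt ℝ f u) (hg : DifferentiableAt ℝ g u) :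
    pd (fun v => f v * g v) u i = pd f u i * g u + f u * pd g u i := by
  simp [pd, fderiv_fun_mul hf hg]; ring

lemma pd_cmul (hf : DifferentiableAt ℝ f u) :
    pd (fun v => c * f v) u i = c * pd f u i := by
  simp [pd, fderiv_const_mul hf]

lemma pd_pow (hf : DifferentiableAt ℝ f u) :
    ∀ n : ℕ, pd (fun v => f v ^ n) u i = n * f u ^ (n-1) * pd f u i
  | 0 => by simpa using (pd_const (c := 1) (u := u) (i := i))
  | n + 1 => by
    simp only [pow_succ]
    rw [pd_mul (hf.fun_pow n) hf, pd_pow hf n]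
    cases n with
    | zero => norm_num
    | succ m => simp only [Nat.add_sub_cancel]; push_cast; ring_nf
end pdLemmas

set_option maxHeartbeats 2000000 in
/-- The vector fields `X₁` and `X₃` of the stationary KdV₅ system commute. -/
theorem stmt2 :
    ∀ u : Fin 5 → ℝ, ∀ i : Fin 5,
      ∑ j, (X1 u j * pd (fun v => X3 v i) u j - X3 u j * pd (fun v => X1 v i) u j) = 0 := by
  intro u i
  fin_cases i <;>
  · simp only [X1, X3, Fin.sum_univ_five]
    simp only [show ((⟨0, by omega⟩ : Fin 5) = 0) from rfl, show ((⟨1, by omega⟩ : Fin 5) = 1) from rfl,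
      show ((⟨2, by omega⟩ : Fin 5) = 2) from rfl, show ((⟨3, by omega⟩ : Fin 5) = 3) from rfl,
      show ((⟨4, by omega⟩ : Fin 5) = 4) from rfl,
      Matrix.cons_val_zero, Matrix.cons_val_one, Matrix.head_cons,
      Matrix.cons_val_two, Matrix.tail_cons, Matrix.cons_val_three, Matrix.cons_val_four]
    simp (disch := fun_prop) only [pd_add, pd_sub, pd_mul, pd_cmul, pd_pow, pd_apply, pd_const]
    simp only [Fin.reduceEq, reduceIte]
    ring
end
end

section
/- The function H_2 = u_4 - 10u_0u_2 - 5u_1^2 + 10u_0^3 is a Casimir of P_0: the vector P_0 · dH_2 vanishes identically, where dH_2 is the gradient (∂H_2/∂u_0, ..., ∂H_2/∂u_4). -/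
noncomputable section

lemma hH2 (u : Fin 5 → ℝ) : HasFDerivAt H2
    ((ContinuousLinearMap.proj 4 : (Fin 5 → ℝ) →L[ℝ] ℝ)
      - ((10 * u 2 - 30*(u 0)^2) • ContinuousLinearMap.proj 0)
      - ((10 * u 0) • ContinuousLinearMap.proj 2)
      - ((10 * u 1) • ContinuousLinearMap.proj 1)) u := by
  have h : ∀ i : Fin 5, HasFDerivAt (fun v : Fin 5 → ℝ => v i)
      (ContinuousLinearMap.proj i : (Fin 5 → ℝ) →L[ℝ] ℝ) u := fun i =>
    hasFDerivAt_apply i u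
  have := ((h 4).sub ((((h 0).const_mul 10).mul (h 2))))
    |>.sub ((((h 1).mul (h 1)).const_mul 5))
    |>.add ((((h 0).mul ((h 0).mul (h 0)))).const_mul 10)
  convert this using 1
  · rfl
  · rfl
  · rfl
  · rfl
  · rfl
  · ext v; simp [H2]; ring
  · ext v
    simp [ContinuousLinearMap.proj]
    ring

lemma pd_H2 (u : Fin 5 → ℝ) (i : Fin 5) :
    pd H2 u i = ![30*(u 0)^2 - 10*u 2, -10*u 1, -10*u 0, 0, 1] i := by
  rw [pd, (hH2 u).fderiv]
  fin_cases i <;>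
    simp [ContinuousLinearMap.proj, Pi.single, Function.update] <;> ring

/-- `H₂` is a Casimir of `P₀`: `P₀ · dH₂ = 0`. -/
theorem stmt6 :
    ∀ u : Fin 5 → ℝ, ∀ i : Fin 5, ∑ j, P0 u i j * pd H2 u j = 0 := by
  intro u i
  simp only [pd_H2, Fin.sum_univ_five]
  fin_cases i <;> simp [P0] <;> ring
end
end

section
/- The function H_0 = (1/16)(-2u_2u_4 + 6u_0^2u_4 + u_3^2 - 12u_0u_1u_3 + 16u_0u_2^2 + 12u_1^2u_2 - 60u_0^3u_2 + 36u_0^5) is a Casimir of P_1: P_1 · dH_0 = 0 identically. -/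
noncomputable section

set_option maxHeartbeats 1000000 in
lemma pd_H0 (u : Fin 5 → ℝ) (j : Fin 5) :
    pd H0 u j = ![(1/16)*(12*u 0*u 4 - 12*u 1*u 3 + 16*(u 2)^2 - 180*(u 0)^2*u 2 + 180*(u 0)^4),
      (1/16)*(-12*u 0*u 3 + 24*u 1*u 2),
      (1/16)*(-2*u 4 + 32*u 0*u 2 + 12*(u 1)^2 - 60*(u 0)^3),
      (1/16)*(2*u 3 - 12*u 0*u 1),
      (1/16)*(-2*u 2 + 6*(u 0)^2)] j := by
  have h : ∀ i : Fin 5, HasFDerivAt (fun u : Fin 5 → ℝ => u i)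
      (ContinuousLinearMap.proj (R := ℝ) i) u := fun i => hasFDerivAt_apply (𝕜 := ℝ) i u
  have hp : ∀ (i : Fin 5) (n : ℕ), HasFDerivAt (fun u : Fin 5 → ℝ => (u i)^n)
      (((n : ℝ) * (u i)^(n-1)) • ContinuousLinearMap.proj (R := ℝ) i) u :=
    fun i n => (hasDerivAt_pow n (u i)).comp_hasFDerivAt u (h i)
  have H : HasFDerivAt H0 _ u :=
    ((((((((((h 2).const_mul (-2)).mul (h 4)).add
      (((hp 0 2).const_mul 6).mul (h 4))).add
      (hp 3 2)).sub
      ((((h 0).const_mul 12).mul (h 1)).mul (h 3))).add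
      (((h 0).const_mul 16).mul (hp 2 2))).add
      (((hp 1 2).const_mul 12).mul (h 2))).sub
      (((hp 0 3).const_mul 60).mul (h 2))).add
      ((hp 0 5).const_mul 36)).const_mul (1/16)
  rw [pd, H.fderiv]
  fin_cases j <;>
    · simp only [ContinuousLinearMap.add_apply, ContinuousLinearMap.sub_apply,
        ContinuousLinearMap.smul_apply, ContinuousLinearMap.proj_apply, smul_eq_mul,
        Pi.single_apply, Matrix.cons_val_zero, Matrix.cons_val_one, Matrix.head_cons,
        Matrix.cons_val_fin_one, Matrix.cons_val', Matrix.empty_val',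
        Matrix.cons_val_two, Matrix.cons_val_three, Matrix.cons_val_four, Matrix.tail_cons]
      norm_num [Fin.ext_iff, show ((4:Fin 5):ℕ) = 4 from rfl, show ((3:Fin 5):ℕ) = 3 from rfl,
        show ((2:Fin 5):ℕ) = 2 from rfl, show ((1:Fin 5):ℕ) = 1 from rfl,
        show ((0:Fin 5):ℕ) = 0 from rfl]
      try ring

/-- `H₀` is a Casimir of `P₁`: `P₁ · dH₀ = 0`. -/
theorem stmt7 :
    ∀ u : Fin 5 → ℝ, ∀ i : Fin 5, ∑ j, P1 u i j * pd H0 u j = 0 := by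
  intro u i
  simp only [Fin.sum_univ_five, pd_H0]
  fin_cases i <;> simp [P1] <;> ring
end
end

section
/- The vector field X_3 of the stationary KdV_5 system is bi-Hamiltonian: X_3 = P_0 · dH_0 = P_1 · dH_1 identically on R^5. -/
noncomputable section

theorem pdH0 (u : Fin 5 → ℝ) (i : Fin 5) :
    pd H0 u i =
      ![(1/16)*(12*u 0*u 4 - 12*u 1*u 3 + 16*(u 2)^2 - 180*(u 0)^2*u 2 + 180*(u 0)^4),
        (1/16)*(-12*u 0*u 3 + 24*u 1*u 2),
        (1/16)*(-2*u 4 + 32*u 0*u 2 + 12*(u 1)^2 - 60*(u 0)^3),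
        (1/16)*(2*u 3 - 12*u 0*u 1),
        (1/16)*(-2*u 2 + 6*(u 0)^2)] i := by
  have e : H0 = fun v : Fin 5 → ℝ => (1/16) * ((-2)*(v 2*v 4) + 6*(v 0*(v 0*v 4))
      + 1*(v 3*v 3) + (-12)*(v 0*(v 1*v 3)) + 16*(v 0*(v 2*v 2)) + 12*(v 1*(v 1*v 2))
      + (-60)*(v 0*(v 0*(v 0*v 2))) + 36*(v 0*(v 0*(v 0*(v 0*v 0))))) := by
    funext v; simp only [H0]; ring
  have p0 := hasFDerivAt_apply (𝕜 := ℝ) (0:Fin 5) u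
  have p1 := hasFDerivAt_apply (𝕜 := ℝ) (1:Fin 5) u
  have p2 := hasFDerivAt_apply (𝕜 := ℝ) (2:Fin 5) u
  have p3 := hasFDerivAt_apply (𝕜 := ℝ) (3:Fin 5) u
  have p4 := hasFDerivAt_apply (𝕜 := ℝ) (4:Fin 5) u
  have h : HasFDerivAt (fun v : Fin 5 → ℝ => (1/16) * ((-2)*(v 2*v 4) + 6*(v 0*(v 0*v 4))
      + 1*(v 3*v 3) + (-12)*(v 0*(v 1*v 3)) + 16*(v 0*(v 2*v 2)) + 12*(v 1*(v 1*v 2))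
      + (-60)*(v 0*(v 0*(v 0*v 2))) + 36*(v 0*(v 0*(v 0*(v 0*v 0)))))) _ u :=
    ((p2.mul p4).const_mul (-2)
      |>.add ((p0.mul (p0.mul p4)).const_mul 6)
      |>.add ((p3.mul p3).const_mul 1)
      |>.add ((p0.mul (p1.mul p3)).const_mul (-12))
      |>.add ((p0.mul (p2.mul p2)).const_mul 16)
      |>.add ((p1.mul (p1.mul p2)).const_mul 12)
      |>.add ((p0.mul (p0.mul (p0.mul p2))).const_mul (-60))
      |>.add ((p0.mul (p0.mul (p0.mul (p0.mul p0)))).const_mul 36)).const_mul (1/16)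
  rw [pd, e, h.fderiv]
  fin_cases i
  all_goals simp only [ContinuousLinearMap.add_apply, ContinuousLinearMap.coe_smul',
    Pi.smul_apply, ContinuousLinearMap.proj_apply, smul_eq_mul]
  all_goals simp (config := {decide := true}) [Pi.single_apply]
  all_goals ring

theorem pdH1 (u : Fin 5 → ℝ) (i : Fin 5) :
    pd H1 u i =
      ![-(1/4)*(2*u 4 - 40*u 0*u 2 + 60*(u 0)^3),
        (1/2)*u 3,
        -(1/4)*(2*u 2 - 20*(u 0)^2),
        (1/2)*u 1,
        -(1/2)*u 0] i := by
  have e : H1 = fun v : Fin 5 → ℝ => (-(1/4)) * (2*(v 0*v 4) + (-2)*(v 1*v 3)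
      + 1*(v 2*v 2) + (-20)*(v 0*(v 0*v 2)) + 15*(v 0*(v 0*(v 0*v 0)))) := by
    funext v; simp only [H1]; ring
  have p0 := hasFDerivAt_apply (𝕜 := ℝ) (0:Fin 5) u
  have p1 := hasFDerivAt_apply (𝕜 := ℝ) (1:Fin 5) u
  have p2 := hasFDerivAt_apply (𝕜 := ℝ) (2:Fin 5) u
  have p3 := hasFDerivAt_apply (𝕜 := ℝ) (3:Fin 5) u
  have p4 := hasFDerivAt_apply (𝕜 := ℝ) (4:Fin 5) u
  have h : HasFDerivAt (fun v : Fin 5 → ℝ => (-(1/4)) * (2*(v 0*v 4) + (-2)*(v 1*v 3)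
      + 1*(v 2*v 2) + (-20)*(v 0*(v 0*v 2)) + 15*(v 0*(v 0*(v 0*v 0))))) _ u :=
    ((p0.mul p4).const_mul 2
      |>.add ((p1.mul p3).const_mul (-2))
      |>.add ((p2.mul p2).const_mul 1)
      |>.add ((p0.mul (p0.mul p2)).const_mul (-20))
      |>.add ((p0.mul (p0.mul (p0.mul p0))).const_mul 15)).const_mul (-(1/4))
  rw [pd, e, h.fderiv]
  fin_cases i
  all_goals simp only [ContinuousLinearMap.add_apply, ContinuousLinearMap.coe_smul',
    Pi.smul_apply, ContinuousLinearMap.proj_apply, smul_eq_mul]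
  all_goals simp (config := {decide := true}) [Pi.single_apply]
  all_goals ring

/-- `X₃` is bi-Hamiltonian: `X₃ = P₀ · dH₀ = P₁ · dH₁`. -/
theorem stmt9 :
    ∀ u : Fin 5 → ℝ, ∀ i : Fin 5,
      X3 u i = ∑ j, P0 u i j * pd H0 u j ∧
      X3 u i = ∑ j, P1 u i j * pd H1 u j := by
  intro u i
  refine ⟨?_, ?_⟩
  · simp only [Fin.sum_univ_five, pdH0]
    fin_cases i
    all_goals simp [X3, P0]
    all_goals ring
  · simp only [Fin.sum_univ_five, pdH1]
    fin_cases i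
    all_goals simp [X3, P1]
    all_goals ring
end
end

section
/- H(λ) := H_2λ^2 + H_1λ + H_0 is a Casimir of the Poisson pencil P_λ := P_1 - λP_0, i.e., (P_1 - λP_0)·dH(λ) = 0 identically in (u_0,...,u_4) and λ. -/
noncomputable section

private lemma pdF (lam : ℝ) (u : Fin 5 → ℝ) (i : Fin 5) :
    pd (fun v => H2 v * lam^2 + H1 v * lam + H0 v) u i =
    ![ (30*(u 0)^2 - 10*u 2)*lam^2
        + (-(1/4))*(2*u 4 - 40*u 0*u 2 + 60*(u 0)^3)*lam
        + (1/16)*(12*u 0*u 4 - 12*u 1*u 3 + 16*(u 2)^2 - 180*(u 0)^2*u 2 + 180*(u 0)^4),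
       (-10*u 1)*lam^2 + ((1/2)*u 3)*lam + (1/16)*(-12*u 0*u 3 + 24*u 1*u 2),
       (-10*u 0)*lam^2 + (-(1/4))*(2*u 2 - 20*(u 0)^2)*lam
        + (1/16)*(-2*u 4 + 32*u 0*u 2 + 12*(u 1)^2 - 60*(u 0)^3),
       ((1/2)*u 1)*lam + (1/16)*(2*u 3 - 12*u 0*u 1),
       lam^2 + (-(1/2)*u 0)*lam + (1/16)*(-2*u 2 + 6*(u 0)^2) ] i := by
  have hv : ∀ j : Fin 5, HasFDerivAt (fun v : Fin 5 → ℝ => v j)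
      (ContinuousLinearMap.proj j : (Fin 5 → ℝ) →L[ℝ] ℝ) u :=
    fun j => hasFDerivAt_apply (𝕜 := ℝ) j u
  set pr : Fin 5 → ((Fin 5 → ℝ) →L[ℝ] ℝ) := fun j => ContinuousLinearMap.proj j with hpr
  set c : Fin 5 → ℝ :=
    ![ (30*(u 0)^2 - 10*u 2)*lam^2
        + (-(1/4))*(2*u 4 - 40*u 0*u 2 + 60*(u 0)^3)*lam
        + (1/16)*(12*u 0*u 4 - 12*u 1*u 3 + 16*(u 2)^2 - 180*(u 0)^2*u 2 + 180*(u 0)^4),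
       (-10*u 1)*lam^2 + ((1/2)*u 3)*lam + (1/16)*(-12*u 0*u 3 + 24*u 1*u 2),
       (-10*u 0)*lam^2 + (-(1/4))*(2*u 2 - 20*(u 0)^2)*lam
        + (1/16)*(-2*u 4 + 32*u 0*u 2 + 12*(u 1)^2 - 60*(u 0)^3),
       ((1/2)*u 1)*lam + (1/16)*(2*u 3 - 12*u 0*u 1),
       lam^2 + (-(1/2)*u 0)*lam + (1/16)*(-2*u 2 + 6*(u 0)^2) ] with hc
  have h : HasFDerivAt (fun v => H2 v * lam^2 + H1 v * lam + H0 v)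
      (c 0 • pr 0 + c 1 • pr 1 + c 2 • pr 2 + c 3 • pr 3 + c 4 • pr 4) u := by
    have hH2 := (((hv 4).sub (((hv 0).const_mul 10).mul (hv 2))).sub
      ((((hv 1).mul (hv 1))).const_mul 5)).add (((((hv 0).mul (hv 0)).mul (hv 0))).const_mul 10)
    have hH1 := (((((((hv 0).const_mul 2).mul (hv 4)).sub
      (((hv 1).const_mul 2).mul (hv 3))).add
      (((hv 2).mul (hv 2)))).sub (((((hv 0).mul (hv 0))).const_mul 20).mul (hv 2))).add
      ((((((hv 0).mul (hv 0)).mul (hv 0)).mul (hv 0))).const_mul 15)).const_mul (-(1/4))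
    have hH0 := (((((((((((hv 2).const_mul 2).mul (hv 4)).neg).add
      (((((hv 0).mul (hv 0))).const_mul 6).mul (hv 4))).add (((hv 3).mul (hv 3)))).sub
      ((((hv 0).const_mul 12).mul (hv 1)).mul (hv 3))).add
      (((hv 0).const_mul 16).mul (((hv 2).mul (hv 2))))).add
      (((((hv 1).mul (hv 1))).const_mul 12).mul (hv 2))).sub
      ((((((hv 0).mul (hv 0)).mul (hv 0))).const_mul 60).mul (hv 2))).add
      (((((((hv 0).mul (hv 0)).mul (hv 0)).mul (hv 0)).mul (hv 0))).const_mul 36)).const_mul (1/16)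
    have hbig := ((hH2.mul_const (lam^2)).add (hH1.mul_const lam)).add hH0
    refine HasFDerivAt.congr_fderiv (hbig.congr_of_eventuallyEq
      (Filter.Eventually.of_forall fun v => ?_)) ?_
    · simp only [H0, H1, H2, Pi.add_apply, Pi.sub_apply, Pi.mul_apply, Pi.neg_apply]; ring
    · ext v
      simp only [hc, hpr, ContinuousLinearMap.add_apply, ContinuousLinearMap.sub_apply,
        ContinuousLinearMap.neg_apply, ContinuousLinearMap.smul_apply,
        ContinuousLinearMap.coe_smul', Pi.smul_apply, ContinuousLinearMap.proj_apply,
        smul_eq_mul, Matrix.cons_val_zero, Matrix.cons_val_one, Matrix.head_cons,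
        Matrix.cons_val_two, Matrix.cons_val_three, Matrix.cons_val_four, Matrix.tail_cons,
        Matrix.head_fin_const, Pi.mul_apply]
      ring
  rw [pd, h.fderiv]
  simp only [hc, hpr, ContinuousLinearMap.add_apply, ContinuousLinearMap.smul_apply,
    ContinuousLinearMap.proj_apply, smul_eq_mul]
  fin_cases i <;>
    simp [Pi.single_apply, Matrix.cons_val_zero, Matrix.cons_val_one, Matrix.head_cons] <;>
    ring

/-- `H(λ) = H₂λ² + H₁λ + H₀` is a Casimir of the Poisson pencil `P₁ - λP₀`. -/
theorem stmt10 :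
    ∀ u : Fin 5 → ℝ, ∀ lam : ℝ, ∀ i : Fin 5,
      ∑ j, (P1 u i j - lam * P0 u i j) *
        pd (fun v => H2 v * lam^2 + H1 v * lam + H0 v) u j = 0 := by
  intro u lam i
  simp only [Fin.sum_univ_five, pdF]
  fin_cases i <;>
    simp [P0, P1, Matrix.cons_val_zero, Matrix.cons_val_one, Matrix.head_cons] <;> ring
end
end

section
/- The vector field X_1 of KdV_5 admits the Lax representation dL/dt_1 = [V^(1), L], where L is the 2x2 matrix polynomial L(λ) = (1/16) times the matrix with entries L_{11} = 4u_1λ + u_3 - 6u_0u_1, L_{12} = 16λ^2 - 8u_0λ + 6u_0^2 - 2u_2, L_{21} = 16λ^3 + 8u_0λ^2 + 2λ(u_2 - u_0^2) + u_4 - 8u_0u_2 - 6u_1^2 + 6u_0^3, L_{22} = -L_{11}, and V^(1) = [[0, 1], [λ + u_0, 0]]; here dL/dt_1 means differentiating each entry of L along the vector field X_1, and the identity holds for all λ. -/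
noncomputable section

/-- The Lax matrix `L(λ)` of the stationary KdV₅ system. -/
def Lmat (u : Fin 5 → ℝ) (lam : ℝ) : Matrix (Fin 2) (Fin 2) ℝ :=
  (1/16 : ℝ) •
    !![4*u 1*lam + u 3 - 6*u 0*u 1,
       16*lam^2 - 8*u 0*lam + 6*(u 0)^2 - 2*u 2;
       16*lam^3 + 8*u 0*lam^2 + 2*lam*(u 2 - (u 0)^2) + u 4 - 8*u 0*u 2 - 6*(u 1)^2 + 6*(u 0)^3,
       -(4*u 1*lam + u 3 - 6*u 0*u 1)]

/-- The matrix `V⁽¹⁾(λ)` of the KdV₅ Lax pair. -/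
def V1mat (u : Fin 5 → ℝ) (lam : ℝ) : Matrix (Fin 2) (Fin 2) ℝ :=
  !![0, 1; lam + u 0, 0]

namespace KdVAux
def E11 (lam : ℝ) (v : Fin 5 → ℝ) : ℝ := (1/16)*(4*v 1*lam + v 3 - 6*v 0*v 1)
def E12 (lam : ℝ) (v : Fin 5 → ℝ) : ℝ := (1/16)*(16*lam^2 - 8*v 0*lam + 6*(v 0*v 0) - 2*v 2)
def E21 (lam : ℝ) (v : Fin 5 → ℝ) : ℝ :=
  (1/16)*(16*lam^3 + 8*v 0*lam^2 + 2*lam*(v 2 - v 0*v 0) + v 4 - 8*v 0*v 2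
    - 6*v 1*v 1 + 6*v 0*v 0*v 0)

lemma pd_of {H : (Fin 5 → ℝ) → ℝ} {u : Fin 5 → ℝ} {L : (Fin 5 → ℝ) →L[ℝ] ℝ}
    (h : HasFDerivAt H L u) (k : Fin 5) : pd H u k = L (Pi.single k 1) := by
  rw [pd, h.fderiv]

lemma proj_hfd (u : Fin 5 → ℝ) (i : Fin 5) :
    HasFDerivAt (fun v : Fin 5 → ℝ => v i)
      (ContinuousLinearMap.proj i : (Fin 5 → ℝ) →L[ℝ] ℝ) u :=
  (ContinuousLinearMap.proj i : (Fin 5 → ℝ) →L[ℝ] ℝ).hasFDerivAt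

lemma pdE11 (u : Fin 5 → ℝ) (lam : ℝ) (k : Fin 5) :
    pd (E11 lam) u k
      = ![(1/16)*(-6*u 1), (1/16)*(4*lam - 6*u 0), 0, 1/16, 0] k := by
  have p := proj_hfd u
  have h : HasFDerivAt (E11 lam) _ u :=
    (((((p 1).const_mul 4).mul_const lam).add (p 3)).sub
      (((p 0).const_mul 6).mul (p 1))).const_mul (1/16)
  rw [pd_of h]
  fin_cases k <;> (simp [ContinuousLinearMap.proj_apply, Pi.single_apply]; try ring)

lemma pdE12 (u : Fin 5 → ℝ) (lam : ℝ) (k : Fin 5) :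
    pd (E12 lam) u k
      = ![(1/16)*(-8*lam + 12*u 0), 0, (1/16)*(-2), 0, 0] k := by
  have p := proj_hfd u
  have h : HasFDerivAt (E12 lam) _ u :=
    ((((hasFDerivAt_const (16*lam^2) u).sub (((p 0).const_mul 8).mul_const lam)).add
      (((p 0).mul (p 0)).const_mul 6)).sub ((p 2).const_mul 2)).const_mul (1/16)
  rw [pd_of h]
  fin_cases k <;> (simp [ContinuousLinearMap.proj_apply, Pi.single_apply]; try ring)

lemma pdE21 (u : Fin 5 → ℝ) (lam : ℝ) (k : Fin 5) :
    pd (E21 lam) u k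
      = ![(1/16)*(8*lam^2 - 4*lam*u 0 - 8*u 2 + 18*u 0*u 0),
          (1/16)*(-12*u 1), (1/16)*(2*lam - 8*u 0), 0, 1/16] k := by
  have p := proj_hfd u
  have a1 := (hasFDerivAt_const (16*lam^3) u).add (((p 0).const_mul 8).mul_const (lam^2))
  have a2 := a1.add (((p 2).sub ((p 0).mul (p 0))).const_mul (2*lam))
  have a3 := a2.add (p 4)
  have a4 := a3.sub (((p 0).const_mul 8).mul (p 2))
  have a5 := a4.sub (((p 1).const_mul 6).mul (p 1))
  have a6 := a5.add ((((p 0).const_mul 6).mul (p 0)).mul (p 0))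
  have h2 : HasFDerivAt (E21 lam) _ u := a6.const_mul (1/16)
  rw [pd_of h2]
  fin_cases k <;> (simp [ContinuousLinearMap.proj_apply, Pi.single_apply]; try ring)

lemma e11 (lam : ℝ) : (fun v => Lmat v lam 0 0) = E11 lam := by
  funext v; simp [Lmat, E11]; try ring
lemma e12 (lam : ℝ) : (fun v => Lmat v lam 0 1) = E12 lam := by
  funext v; simp [Lmat, E12]; try ring
lemma e21 (lam : ℝ) : (fun v => Lmat v lam 1 0) = E21 lam := by
  funext v; simp [Lmat, E21]; try ring
lemma e22 (lam : ℝ) : (fun v => Lmat v lam 1 1) = fun v => -(E11 lam v) := by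
  funext v; simp [Lmat, E11]; try ring

lemma pdNegE11 (u : Fin 5 → ℝ) (lam : ℝ) (k : Fin 5) :
    pd (fun v => -(E11 lam v)) u k
      = -(![(1/16)*(-6*u 1), (1/16)*(4*lam - 6*u 0), 0, 1/16, 0] k) := by
  have p := proj_hfd u
  have h : HasFDerivAt (E11 lam) _ u :=
    (((((p 1).const_mul 4).mul_const lam).add (p 3)).sub
      (((p 0).const_mul 6).mul (p 1))).const_mul (1/16)
  rw [pd_of (show HasFDerivAt (fun v => -(E11 lam v)) _ u from h.neg), ← pdE11 u lam k, pd_of h]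
  simp

lemma main00 (u : Fin 5 → ℝ) (lam : ℝ) :
    ∑ k, X1 u k * pd (fun v => Lmat v lam 0 0) u k
      = (V1mat u lam * Lmat u lam - Lmat u lam * V1mat u lam) 0 0 := by
  rw [e11, Fin.sum_univ_five]
  simp [pdE11, X1, V1mat, Lmat, Matrix.sub_apply, Matrix.mul_apply, Fin.sum_univ_two]
  ring
lemma main01 (u : Fin 5 → ℝ) (lam : ℝ) :
    ∑ k, X1 u k * pd (fun v => Lmat v lam 0 1) u k
      = (V1mat u lam * Lmat u lam - Lmat u lam * V1mat u lam) 0 1 := by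
  rw [e12, Fin.sum_univ_five]
  simp [pdE12, X1, V1mat, Lmat, Matrix.sub_apply, Matrix.mul_apply, Fin.sum_univ_two]
  ring
lemma main10 (u : Fin 5 → ℝ) (lam : ℝ) :
    ∑ k, X1 u k * pd (fun v => Lmat v lam 1 0) u k
      = (V1mat u lam * Lmat u lam - Lmat u lam * V1mat u lam) 1 0 := by
  rw [e21, Fin.sum_univ_five]
  simp [pdE21, X1, V1mat, Lmat, Matrix.sub_apply, Matrix.mul_apply, Fin.sum_univ_two]
  ring
lemma main11 (u : Fin 5 → ℝ) (lam : ℝ) :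
    ∑ k, X1 u k * pd (fun v => Lmat v lam 1 1) u k
      = (V1mat u lam * Lmat u lam - Lmat u lam * V1mat u lam) 1 1 := by
  rw [e22, Fin.sum_univ_five]
  simp [pdNegE11, X1, V1mat, Lmat, Matrix.sub_apply, Matrix.mul_apply, Fin.sum_univ_two]
  ring
end KdVAux

/-- `X₁` admits the Lax representation `dL/dt₁ = [V⁽¹⁾, L]`. -/
theorem stmt12 :
    ∀ u : Fin 5 → ℝ, ∀ lam : ℝ, ∀ i j : Fin 2,
      ∑ k, X1 u k * pd (fun v => Lmat v lam i j) u k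
        = (V1mat u lam * Lmat u lam - Lmat u lam * V1mat u lam) i j := by
  intro u lam i j
  fin_cases i <;> fin_cases j
  · exact KdVAux.main00 u lam
  · exact KdVAux.main01 u lam
  · exact KdVAux.main10 u lam
  · exact KdVAux.main11 u lam
end
end

section
/- The determinant of the Lax matrix L(λ) of KdV_5 satisfies: -det L(λ) = λ^5 + (1/16)(H_2λ^2 + H_1λ + H_0), where H_0, H_1, H_2 are the integrals of motion of the KdV_5 system. In particular the coefficients of -det L(λ) as a polynomial in λ are integrals of motion for X_1 and X_3. -/
noncomputable section

def NF (lam : ℝ) (v : Fin 5 → ℝ) : ℝ :=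
  lam^5 + (1/16:ℝ)*(lam^2*(v 4 + (-10)*(v 0*v 2) + (-5)*(v 1*v 1) + 10*(v 0*v 0*v 0))
    + lam*((-(1/4:ℝ))*(2*(v 0*v 4) + (-2)*(v 1*v 3) + v 2*v 2 + (-20)*(v 0*v 0*v 2)
        + 15*(v 0*v 0*v 0*v 0)))
    + (1/16:ℝ)*((-2)*(v 2*v 4) + 6*(v 0*v 0*v 4) + v 3*v 3 + (-12)*(v 0*v 1*v 3)
        + 16*(v 0*(v 2*v 2)) + 12*(v 1*v 1*v 2) + (-60)*(v 0*v 0*v 0*v 2)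
        + 36*(v 0*v 0*v 0*v 0*v 0)))

lemma detNF (u : Fin 5 → ℝ) (lam : ℝ) : -(Lmat u lam).det = NF lam u := by
  simp [Lmat, Matrix.det_fin_two, NF]
  ring

set_option maxHeartbeats 2000000 in
lemma pdNF (u : Fin 5 → ℝ) (lam : ℝ) :
    pd (NF lam) u 0 = (1/16)*(lam^2*(-10*u 2 + 30*(u 0)^2) - (lam/4)*(2*u 4 - 40*u 0*u 2 + 60*(u 0)^3)
        + (1/16)*(12*u 0*u 4 - 12*u 1*u 3 + 16*(u 2)^2 - 180*(u 0)^2*u 2 + 180*(u 0)^4)) ∧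
    pd (NF lam) u 1 = (1/16)*(lam^2*(-10*u 1) + (lam/4)*(2*u 3) + (1/16)*(-12*u 0*u 3 + 24*u 1*u 2)) ∧
    pd (NF lam) u 2 = (1/16)*(lam^2*(-10*u 0) - (lam/4)*(2*u 2 - 20*(u 0)^2)
        + (1/16)*(-2*u 4 + 32*u 0*u 2 + 12*(u 1)^2 - 60*(u 0)^3)) ∧
    pd (NF lam) u 3 = (1/16)*((lam/4)*(2*u 1) + (1/16)*(2*u 3 - 12*u 0*u 1)) ∧
    pd (NF lam) u 4 = (1/16)*(lam^2 - (lam/4)*(2*u 0) + (1/16)*(-2*u 2 + 6*(u 0)^2)) := by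

  have hp : ∀ i : Fin 5, HasFDerivAt (fun v : Fin 5 → ℝ => v i)
      (ContinuousLinearMap.proj (R:=ℝ) (φ:=fun _ : Fin 5 => ℝ) i) u :=
    fun i => (ContinuousLinearMap.proj (R:=ℝ) (φ:=fun _ : Fin 5 => ℝ) i).hasFDerivAt
  have hA := (((hp 4).add (((hp 0).mul (hp 2)).const_mul (-10))).add
      (((hp 1).mul (hp 1)).const_mul (-5))).add
      ((((hp 0).mul (hp 0)).mul (hp 0)).const_mul 10)
  have hB1 := HasFDerivAt.const_mul
      ((((((((hp 0).mul (hp 4)).const_mul 2).add (((hp 1).mul (hp 3)).const_mul (-2))).add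
        ((hp 2).mul (hp 2))).add
        ((((hp 0).mul (hp 0)).mul (hp 2)).const_mul (-20))).add
        (((((hp 0).mul (hp 0)).mul (hp 0)).mul (hp 0)).const_mul 15))) (-(1/4:ℝ))
  have hB0 := HasFDerivAt.const_mul
      ((((((((((hp 2).mul (hp 4)).const_mul (-2)).add
        ((((hp 0).mul (hp 0)).mul (hp 4)).const_mul 6)).add
        ((hp 3).mul (hp 3))).add
        ((((hp 0).mul (hp 1)).mul (hp 3)).const_mul (-12))).add
        (((hp 0).mul ((hp 2).mul (hp 2))).const_mul 16)).add
        ((((hp 1).mul (hp 1)).mul (hp 2)).const_mul 12)).add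
        (((((hp 0).mul (hp 0)).mul (hp 0)).mul (hp 2)).const_mul (-60))).add
        ((((((hp 0).mul (hp 0)).mul (hp 0)).mul (hp 0)).mul (hp 0)).const_mul 36)) (1/16:ℝ)
  have hD : HasFDerivAt (NF lam) _ u :=
    (hasFDerivAt_const (lam^5) u).add
      ((((hA.const_mul (lam^2)).add (hB1.const_mul lam)).add hB0).const_mul (1/16:ℝ))
  have e0 : Pi.single (0 : Fin 5) (1:ℝ) = ![1,0,0,0,0] := by
    ext i; fin_cases i <;> simp
  have e1 : Pi.single (1 : Fin 5) (1:ℝ) = ![0,1,0,0,0] := by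
    ext i; fin_cases i <;> simp [Pi.single_apply]
  have e2 : Pi.single (2 : Fin 5) (1:ℝ) = ![0,0,1,0,0] := by
    ext i; fin_cases i <;> simp [Pi.single_apply]
  have e3 : Pi.single (3 : Fin 5) (1:ℝ) = ![0,0,0,1,0] := by
    ext i; fin_cases i <;> simp [Pi.single_apply]
  have e4 : Pi.single (4 : Fin 5) (1:ℝ) = ![0,0,0,0,1] := by
    ext i; fin_cases i <;> simp [Pi.single_apply]
  refine ⟨?_, ?_, ?_, ?_, ?_⟩ <;> rw [pd, hD.fderiv] <;>
    simp only [e0, e1, e2, e3, e4, ContinuousLinearMap.add_apply,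
      ContinuousLinearMap.coe_smul', Pi.smul_apply, ContinuousLinearMap.proj_apply,
      ContinuousLinearMap.zero_apply, smul_eq_mul, Matrix.cons_val_zero, Matrix.cons_val_one,
      Matrix.head_cons, Matrix.cons_val_two, Matrix.tail_cons, Matrix.cons_val_three,
      Matrix.cons_val_four, Pi.mul_apply] <;>
    ring

/-- `-det L(λ) = λ⁵ + (1/16)(H₂λ² + H₁λ + H₀)`; in particular the coefficients of
`-det L(λ)` are integrals of motion for `X₁` and `X₃`. -/
theorem stmt13 :
    (∀ u : Fin 5 → ℝ, ∀ lam : ℝ,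
      -(Lmat u lam).det = lam^5 + (1/16) * (H2 u * lam^2 + H1 u * lam + H0 u)) ∧
    (∀ u : Fin 5 → ℝ, ∀ lam : ℝ,
      ∑ k, X1 u k * pd (fun v => -(Lmat v lam).det) u k = 0) ∧
    (∀ u : Fin 5 → ℝ, ∀ lam : ℝ,
      ∑ k, X3 u k * pd (fun v => -(Lmat v lam).det) u k = 0) := by
  refine ⟨fun u lam => ?_, fun u lam => ?_, fun u lam => ?_⟩
  · simp [Lmat, Matrix.det_fin_two, H0, H1, H2]
    ring
  · have hfun : (fun v : Fin 5 → ℝ => -(Lmat v lam).det) = NF lam := funext fun v => detNF v lam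
    rw [hfun, Fin.sum_univ_five, (pdNF u lam).1, (pdNF u lam).2.1, (pdNF u lam).2.2.1,
      (pdNF u lam).2.2.2.1, (pdNF u lam).2.2.2.2]
    simp only [X1, Matrix.cons_val_zero, Matrix.cons_val_one, Matrix.head_cons,
      Matrix.cons_val_two, Matrix.tail_cons, Matrix.cons_val_three, Matrix.cons_val_four]
    ring
  · have hfun : (fun v : Fin 5 → ℝ => -(Lmat v lam).det) = NF lam := funext fun v => detNF v lam
    rw [hfun, Fin.sum_univ_five, (pdNF u lam).1, (pdNF u lam).2.1, (pdNF u lam).2.2.1,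
      (pdNF u lam).2.2.2.1, (pdNF u lam).2.2.2.2]
    simp only [X3, Matrix.cons_val_zero, Matrix.cons_val_one, Matrix.head_cons,
      Matrix.cons_val_two, Matrix.tail_cons, Matrix.cons_val_three, Matrix.cons_val_four]
    ring
end
end

section
/- Let g be a Lie algebra of matrices with nondegenerate trace form, A ∈ g fixed, and M_A the space of matrix polynomials X(λ) = λ^{n+1}A + sum_{i=0}^n λ^i X_i with X_i ∈ g. Let P_λ = P_1 - λP_0 be the Poisson pencil on M_A defined by the tensors P_0, P_1 whose block entries are the commutator maps described below. Then for any function F on M_A, the Hamiltonian vector field P_λ dF, evaluated with the pencil parameter identified with the λ in X(λ), equals [∂F/∂X_0, X(λ)]; i.e., it has Lax form with generator the X_0-partial of F. -/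
noncomputable section

attribute [local instance] Matrix.normedAddCommGroup Matrix.normedSpace
attribute [local instance 100] LieRing.ofAssociativeRing

/-- The coefficients of the matrix polynomial `X(λ) = λ^{n+1}A + ∑_{i=0}^n λ^i Xᵢ`,
extended by `X_{n+1} := A` and `X_k := 0` for `k > n+1`. -/
def Xext {m : ℕ} (n : ℕ) (A : Matrix (Fin m) (Fin m) ℝ)
    (X : Fin (n+1) → Matrix (Fin m) (Fin m) ℝ) (k : ℕ) : Matrix (Fin m) (Fin m) ℝ :=
  if h : k ≤ n then X ⟨k, by omega⟩ else if k = n + 1 then A else 0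

/-- The matrix polynomial `X(λ) = λ^{n+1}A + ∑_{i=0}^n λ^i Xᵢ`. -/
def Xpoly {m : ℕ} (n : ℕ) (A : Matrix (Fin m) (Fin m) ℝ)
    (X : Fin (n+1) → Matrix (Fin m) (Fin m) ℝ) (lam : ℝ) : Matrix (Fin m) (Fin m) ℝ :=
  ∑ k ∈ Finset.range (n+2), lam^k • Xext n A X k

/-- The first Poisson tensor `P₀` on `M_A`: the Hankel-type block matrix of
commutator maps `[X_{i+j+1}, ·]` (with `X_{n+1} = A` and higher coefficients zero),
applied to a covector `W`. -/
def P0map {m : ℕ} (n : ℕ) (A : Matrix (Fin m) (Fin m) ℝ)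
    (X W : Fin (n+1) → Matrix (Fin m) (Fin m) ℝ) : Fin (n+1) → Matrix (Fin m) (Fin m) ℝ :=
  fun i => ∑ j : Fin (n+1),
    (Xext n A X ((i:ℕ)+(j:ℕ)+1) * W j - W j * Xext n A X ((i:ℕ)+(j:ℕ)+1))

/-- The second Poisson tensor `P₁` on `M_A`: the `(0,0)` block is `-[X₀, ·]`, the rest of
the first row and column vanish, and the inner block is the shifted Hankel matrix of
commutator maps `[X_{i+j}, ·]`, applied to a covector `W`. -/
def P1map {m : ℕ} (n : ℕ) (A : Matrix (Fin m) (Fin m) ℝ)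
    (X W : Fin (n+1) → Matrix (Fin m) (Fin m) ℝ) : Fin (n+1) → Matrix (Fin m) (Fin m) ℝ :=
  fun i =>
    if (i:ℕ) = 0 then -(X 0 * W 0 - W 0 * X 0)
    else ∑ j : Fin (n+1),
      if (j:ℕ) = 0 then 0
      else Xext n A X ((i:ℕ)+(j:ℕ)) * W j - W j * Xext n A X ((i:ℕ)+(j:ℕ))

/-- On the bi-Hamiltonian manifold `M_A` of `g`-valued matrix polynomials (`g` a Lie
algebra of matrices with nondegenerate trace form, `A ∈ g` fixed), every Hamiltonian
vector field of the Poisson pencil `P_λ = P₁ - λP₀` has Lax form: for a function `F`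
with gradient `dF = (∂F/∂X₀,…,∂F/∂Xₙ)` with respect to the trace pairing, identifying
the pencil parameter with the `λ` in `X(λ)` gives `P_λ dF = [∂F/∂X₀, X(λ)]`. -/
theorem stmt14 {m n : ℕ} (g : LieSubalgebra ℝ (Matrix (Fin m) (Fin m) ℝ))
    (htr : ∀ a ∈ g, (∀ b ∈ g, (a * b).trace = 0) → a = 0)
    (A : Matrix (Fin m) (Fin m) ℝ) (hA : A ∈ g)
    (F : (Fin (n+1) → Matrix (Fin m) (Fin m) ℝ) → ℝ)
    (dF : (Fin (n+1) → Matrix (Fin m) (Fin m) ℝ) → Fin (n+1) → Matrix (Fin m) (Fin m) ℝ)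
    (hdF : ∀ X V, fderiv ℝ F X V = ∑ i, (dF X i * V i).trace)
    (hdFg : ∀ X, (∀ i, X i ∈ g) → ∀ i, dF X i ∈ g)
    (X : Fin (n+1) → Matrix (Fin m) (Fin m) ℝ) (hX : ∀ i, X i ∈ g) (lam : ℝ) :
    ∑ i : Fin (n+1),
        lam^(i:ℕ) • (P1map n A X (dF X) i - lam • P0map n A X (dF X) i)
      = dF X 0 * Xpoly n A X lam - Xpoly n A X lam * dF X 0 := by
  classical
  set W : Fin (n+1) → Matrix (Fin m) (Fin m) ℝ := dF X with hW
  set C : ℕ → Matrix (Fin m) (Fin m) ℝ := Xext n A X with hC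
  have hC0 : C 0 = X 0 := by simp [hC, Xext]
  have hCz : ∀ k, n + 1 < k → C k = 0 := by
    intro k hk
    simp only [hC, Xext]
    rw [dif_neg (by omega), if_neg (by omega)]
  have hsingle : ∀ (v : Matrix (Fin m) (Fin m) ℝ),
      ∑ x : Fin (n+1), (if (x:ℕ) = 0 then v else 0) = v := by
    intro v
    rw [Fin.sum_univ_eq_sum_range (fun i => if i = 0 then v else 0) (n+1),
      Finset.sum_ite_eq' (Finset.range (n+1)) 0 (fun _ => v), if_pos (by simp)]
  -- rewrite each i-summand as a sum over j
  have key : ∀ i : Fin (n+1),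
      lam^(i:ℕ) • (P1map n A X W i - lam • P0map n A X W i)
      = ∑ j : Fin (n+1),
          ((if (i:ℕ) = 0 then
              (if (j:ℕ) = 0 then lam^(i:ℕ) • (-(X 0 * W 0 - W 0 * X 0)) else 0)
            else
              (if (j:ℕ) = 0 then 0
               else lam^(i:ℕ) • (C ((i:ℕ)+(j:ℕ)) * W j - W j * C ((i:ℕ)+(j:ℕ)))))
           - lam^((i:ℕ)+1) • (C ((i:ℕ)+(j:ℕ)+1) * W j - W j * C ((i:ℕ)+(j:ℕ)+1))) := by
    intro i
    rw [Finset.sum_sub_distrib, smul_sub, smul_smul, ← pow_succ]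
    congr 1
    · by_cases hi : (i:ℕ) = 0
      · simp only [P1map, hi, if_true]
        exact (hsingle _).symm
      · simp only [P1map, hi, if_false, Finset.smul_sum]
        refine Finset.sum_congr rfl fun j _ => ?_
        by_cases hj : (j:ℕ) = 0 <;> simp [hj, hC]
    · simp only [P0map, ← hC]
      rw [Finset.smul_sum]
  rw [Finset.sum_congr rfl fun i _ => key i, Finset.sum_comm]
  -- compute the inner sum for each fixed j
  have inner : ∀ j : Fin (n+1),
      (∑ i : Fin (n+1),
          ((if (i:ℕ) = 0 then
              (if (j:ℕ) = 0 then lam^(i:ℕ) • (-(X 0 * W 0 - W 0 * X 0)) else 0)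
            else
              (if (j:ℕ) = 0 then 0
               else lam^(i:ℕ) • (C ((i:ℕ)+(j:ℕ)) * W j - W j * C ((i:ℕ)+(j:ℕ)))))
           - lam^((i:ℕ)+1) • (C ((i:ℕ)+(j:ℕ)+1) * W j - W j * C ((i:ℕ)+(j:ℕ)+1))))
      = if (j:ℕ) = 0 then
          -(∑ k ∈ Finset.range (n+2), lam^k • (C k * W 0 - W 0 * C k)) else 0 := by
    intro j
    by_cases hj : (j:ℕ) = 0
    · have hj0 : j = 0 := by ext; simpa using hj
      subst hj0
      simp only [hj, if_true, Fin.val_zero, Nat.add_zero]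
      rw [Fin.sum_univ_eq_sum_range (fun i =>
        ((if i = 0 then lam^i • (-(X 0 * W 0 - W 0 * X 0)) else 0)
          - lam^(i+1) • (C (i+1) * W 0 - W 0 * C (i+1)))) (n+1)]
      rw [Finset.sum_sub_distrib]
      rw [Finset.sum_ite_eq' (Finset.range (n+1)) 0
        (fun i => lam^i • (-(X 0 * W 0 - W 0 * X 0))), if_pos (by simp)]
      have h2 : ∑ k ∈ Finset.range (n+2), lam^k • (C k * W 0 - W 0 * C k)
          = (∑ i ∈ Finset.range (n+1), lam^(i+1) • (C (i+1) * W 0 - W 0 * C (i+1)))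
            + lam^0 • (C 0 * W 0 - W 0 * C 0) :=
        Finset.sum_range_succ' _ _
      rw [h2, hC0]
      simp only [pow_zero, one_smul, smul_neg]
      abel
    · simp only [hj, if_false]
      set f : ℕ → Matrix (Fin m) (Fin m) ℝ := fun i =>
        if i = 0 then 0 else lam^i • (C (i+(j:ℕ)) * W j - W j * C (i+(j:ℕ))) with hf
      have hterm : ∀ i : Fin (n+1),
          ((if (i:ℕ) = 0 then (0 : Matrix (Fin m) (Fin m) ℝ)
            else lam^(i:ℕ) • (C ((i:ℕ)+(j:ℕ)) * W j - W j * C ((i:ℕ)+(j:ℕ))))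
          - lam^((i:ℕ)+1) • (C ((i:ℕ)+(j:ℕ)+1) * W j - W j * C ((i:ℕ)+(j:ℕ)+1)))
          = f (i:ℕ) - f ((i:ℕ)+1) := by
        intro i
        have : (i:ℕ)+(j:ℕ)+1 = (i:ℕ)+1+(j:ℕ) := by omega
        rw [hf]
        simp only [Nat.succ_ne_zero, if_false, this]
      rw [Finset.sum_congr rfl fun i _ => hterm i]
      rw [Fin.sum_univ_eq_sum_range (fun i => f i - f (i+1)) (n+1),
        Finset.sum_range_sub' f (n+1)]
      have hfz : f (n+1) = 0 := by
        rw [hf]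
        simp only [Nat.succ_ne_zero, if_false]
        rw [hCz (n+1+(j:ℕ)) (by omega)]
        simp
      rw [hfz, hf]
      simp
  rw [Finset.sum_congr rfl fun j _ => inner j]
  rw [hsingle]
  -- identify with the right-hand side
  rw [Xpoly, Finset.mul_sum, Finset.sum_mul, ← Finset.sum_sub_distrib, ← Finset.sum_neg_distrib]
  refine Finset.sum_congr rfl fun k _ => ?_
  rw [mul_smul_comm, smul_mul_assoc, ← smul_sub, ← smul_neg, neg_sub]
end
end

section
/- On the space M_A of sl(2)-valued matrix polynomials X(λ) = λ^{g+1}A + sum_{i=0}^g λ^iX_i, with A = [[0,0],[1,0]], the function H(λ) = (1/2)Tr X(λ)^2 is a Casimir of the Poisson pencil P_λ = P_1 - λP_0: writing H(λ) = sum_{i=0}^{2g+1} H_iλ^i, one has P_λ dH(λ) = 0, using that dH(λ) = (X(λ), λX(λ), ..., λ^gX(λ)) under the trace pairing. -/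
noncomputable section

attribute [local instance] Matrix.normedAddCommGroup Matrix.normedSpace

/-- On `M_A` with `g = sl(2)` and `A = [[0,0],[1,0]]`, the function
`H(λ) = (1/2)Tr X(λ)²` is a Casimir of the Poisson pencil `P_λ = P₁ - λP₀`:
since `dH(λ) = (X(λ), λX(λ), …, λ^g X(λ))` under the trace pairing,
one has `P_λ dH(λ) = 0`. -/
theorem stmt15 (g : ℕ) (X : Fin (g+1) → Matrix (Fin 2) (Fin 2) ℝ)
    (hX : ∀ i, (X i).trace = 0) (lam : ℝ) :
    let A : Matrix (Fin 2) (Fin 2) ℝ := !![0, 0; 1, 0]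
    let W : Fin (g+1) → Matrix (Fin 2) (Fin 2) ℝ := fun j => lam^(j:ℕ) • Xpoly g A X lam
    ∀ i, P1map g A X W i - lam • P0map g A X W i = 0 := by
  intro A W i
  set Y := Xpoly g A X lam with hY
  set C : ℕ → Matrix (Fin 2) (Fin 2) ℝ := fun k => Xext g A X k * Y - Y * Xext g A X k
    with hCdef
  have hW : ∀ (k : ℕ) (j : Fin (g+1)),
      Xext g A X k * W j - W j * Xext g A X k = lam^(j:ℕ) • C k := by
    intro k j
    simp [W, hCdef, mul_smul_comm, smul_mul_assoc, smul_sub, hY]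
  have hChigh : ∀ k, g + 1 < k → C k = 0 := by
    intro k hk
    have h1 : Xext g A X k = 0 := by
      unfold Xext
      rw [dif_neg (by omega), if_neg (by omega)]
    simp [hCdef, h1]
  have key : ∑ k ∈ Finset.range (g+2), lam^k • C k = 0 := by
    have h1 : ∑ k ∈ Finset.range (g+2), lam^k • C k
        = (∑ k ∈ Finset.range (g+2), lam^k • Xext g A X k) * Y
          - Y * (∑ k ∈ Finset.range (g+2), lam^k • Xext g A X k) := by
      simp [hCdef, Finset.sum_sub_distrib, Finset.sum_mul, Finset.mul_sum,
        smul_mul_assoc, mul_smul_comm, smul_sub]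
    rw [h1, ← Xpoly, ← hY, sub_self]
  have hsmul : ∀ (j : ℕ) (M : Matrix (Fin 2) (Fin 2) ℝ),
      lam • (lam^j • M) = lam^(j+1) • M := by
    intro j M
    rw [smul_smul, ← pow_succ']
  by_cases hi : (i:ℕ) = 0
  · -- i = 0 case
    have hP1 : P1map g A X W i = -(lam^(0:ℕ) • C 0) := by
      have hX0 : X 0 = Xext g A X 0 := by simp [Xext]
      simp only [P1map, hi, if_pos]
      rw [hX0, hW 0 0]
      simp
    have hP0 : lam • P0map g A X W i = ∑ k ∈ Finset.range (g+1), lam^(k+1) • C (k+1) := by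
      simp only [P0map, hi, hW, zero_add]
      rw [Finset.smul_sum]
      rw [Fin.sum_univ_eq_sum_range (fun j => lam • (lam ^ j • C (j + 1)))]
      exact Finset.sum_congr rfl fun k _ => hsmul k _
    rw [hP1, hP0]
    have := key
    rw [Finset.sum_range_succ'] at this
    simp only [pow_zero, one_smul] at this ⊢
    linear_combination (norm := abel) -this
  · -- i ≥ 1 case
    have hi1 : 1 ≤ (i:ℕ) := Nat.one_le_iff_ne_zero.mpr hi
    have hP1 : P1map g A X W i
        = ∑ k ∈ Finset.range (g+1), if k = 0 then 0 else lam^k • C ((i:ℕ)+k) := by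
      simp only [P1map, if_neg hi, hW]
      rw [Fin.sum_univ_eq_sum_range
        (fun j => if j = 0 then 0 else lam ^ j • C ((i:ℕ) + j))]
    have hP0 : lam • P0map g A X W i
        = ∑ k ∈ Finset.range (g+1), lam^(k+1) • C ((i:ℕ)+k+1) := by
      simp only [P0map, hW]
      rw [Finset.smul_sum]
      rw [Fin.sum_univ_eq_sum_range (fun j => lam • (lam ^ j • C ((i:ℕ) + j + 1)))]
      exact Finset.sum_congr rfl fun k _ => hsmul k _
    rw [hP1, hP0]
    rw [Finset.sum_range_succ', Finset.sum_range_succ]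
    have hz : C ((i:ℕ) + g + 1) = 0 := hChigh _ (by omega)
    simp [← Nat.add_assoc, hz]
end
end
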